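/- For any a ∈ [0,1) and continuous odd function z on [−1,1] with 1 − u² ± 2az(u) > 0 for u ∈ (−1,1), one has ∫₀¹ [1/√(1−u²+2az(u)) + 1/√(1−u²−2az(u))] du ≥ π + 3a²(∫₀¹ z(u)/√(1−u²) du)² , provided |2az(u)| ≤ (1−u²)/2 on (−1,1). -/

import Mathlib

open Real Set MeasureTheory intervalIntegral


lemma key_poly {s : ℝ} (hs0 : 0 < s) (hs1 : s ≤ 1) {t : ℝ} (hts : t ^ 2 = 1 - s ^ 2) :
    (2 + 3 * t ^ 2 / 4) ^ 2 ≤ 2 / s ^ 2 + 2 / s := by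
  have h2 : s ^ 2 * (2 + 3 * (1 - s ^ 2) / 4) ^ 2 ≤ 2 + 2 * s := by
    have hr : (0:ℝ) ≤ 32 + 96 * s + 39 * s ^ 2 - 18 * s ^ 3 - 9 * s ^ 4 := by nlinarith
    nlinarith [mul_nonneg (sq_nonneg (1 - s)) hr]
  rw [hts]
  rw [div_add_div _ _ (by positivity) (by positivity), le_div_iff₀ (by positivity)]
  nlinarith [h2, sq_nonneg s, hs0]

lemma key1 {t : ℝ} (ht : |t| < 1) :
    2 + 3 * t ^ 2 / 4 ≤ 1 / Real.sqrt (1 + t) + 1 / Real.sqrt (1 - t) := by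
  have h1 : 0 < 1 + t := by cases abs_lt.1 ht; linarith
  have h2 : 0 < 1 - t := by cases abs_lt.1 ht; linarith
  set P := Real.sqrt (1 + t) with hP
  set Q := Real.sqrt (1 - t) with hQ
  have hPp : 0 < P := Real.sqrt_pos.2 h1
  have hQp : 0 < Q := Real.sqrt_pos.2 h2
  have hP2 : P ^ 2 = 1 + t := Real.sq_sqrt h1.le
  have hQ2 : Q ^ 2 = 1 - t := Real.sq_sqrt h2.le
  set s := P * Q with hs
  have hsp : 0 < s := mul_pos hPp hQp
  have hs2 : s ^ 2 = 1 - t ^ 2 := by rw [hs, mul_pow, hP2, hQ2]; ring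
  have hs1 : s ≤ 1 := by nlinarith [sq_nonneg t]
  have hPQ : (P + Q) ^ 2 = 2 + 2 * s := by rw [hs]; linear_combination hP2 + hQ2
  have hA2 : (1 / P + 1 / Q) ^ 2 = 2 / s ^ 2 + 2 / s := by
    have e : 1 / P + 1 / Q = (P + Q) / s := by rw [hs]; field_simp; ring
    rw [e, div_pow, hPQ]
    field_simp
  have hB : (0:ℝ) < 2 + 3 * t ^ 2 / 4 := by positivity
  have hA : 0 < 1 / P + 1 / Q := by positivity
  have := key_poly hsp hs1 (by linarith [hs2] : t ^ 2 = 1 - s ^ 2)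
  nlinarith [this, hA2, hA, hB]

lemma key2 {x b : ℝ} (hx : 0 < x) (hb : |b| ≤ x / 2) :
    2 / Real.sqrt x + 3 / 4 * b ^ 2 / (x ^ 2 * Real.sqrt x) ≤
      1 / Real.sqrt (x + b) + 1 / Real.sqrt (x - b) := by
  have hxne : x ≠ 0 := hx.ne'
  have ht : |b / x| < 1 := by
    rw [abs_div, abs_of_pos hx, div_lt_one hx]
    calc |b| ≤ x / 2 := hb
    _ < x := by linarith
  have h1 : x + b = x * (1 + b / x) := by field_simp
  have h2 : x - b = x * (1 - b / x) := by field_simp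
  have hsx : 0 < Real.sqrt x := Real.sqrt_pos.2 hx
  rw [h1, h2, Real.sqrt_mul hx.le, Real.sqrt_mul hx.le]
  have := key1 ht
  have e1 : 1 / (Real.sqrt x * Real.sqrt (1 + b / x)) = (1 / Real.sqrt x) * (1 / Real.sqrt (1 + b / x)) := by
    ring
  have e2 : 1 / (Real.sqrt x * Real.sqrt (1 - b / x)) = (1 / Real.sqrt x) * (1 / Real.sqrt (1 - b / x)) := by
    ring
  rw [e1, e2, ← mul_add]
  have h3 : 2 / Real.sqrt x + 3 / 4 * b ^ 2 / (x ^ 2 * Real.sqrt x)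
      = (1 / Real.sqrt x) * (2 + 3 * (b / x) ^ 2 / 4) := by
    field_simp
  rw [h3]
  exact mul_le_mul_of_nonneg_left this (by positivity)


lemma D_int : IntervalIntegrable (fun x : ℝ => (1 - x) ^ (-(1/2) : ℝ)) volume 0 1 := by
  have h := intervalIntegral.intervalIntegrable_rpow' (a := (0:ℝ)) (b := 1)
    (r := -(1/2)) (by norm_num)
  simpa using (h.comp_sub_left 1).symm

lemma base_bound {x : ℝ} (hx : x ∈ Ioo (0:ℝ) 1) :
    1 / Real.sqrt (1 - x ^ 2) ≤ (1 - x) ^ (-(1/2) : ℝ) := by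
  obtain ⟨h0, h1⟩ := hx
  have hx2 : 0 < 1 - x := by linarith
  have h2 : (1 - x) ^ (-(1/2) : ℝ) = 1 / Real.sqrt (1 - x) := by
    rw [Real.rpow_neg hx2.le, ← Real.sqrt_eq_rpow, one_div]
  rw [h2]
  apply one_div_le_one_div_of_le (Real.sqrt_pos.2 (by nlinarith))
  apply Real.sqrt_le_sqrt; nlinarith

lemma base_int : IntervalIntegrable (fun u : ℝ => 1 / Real.sqrt (1 - u ^ 2)) volume 0 1 := by
  have hD := D_int
  rw [intervalIntegrable_iff_integrableOn_Ioo_of_le zero_le_one] at hD ⊢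
  apply hD.mono' ?_ ?_
  · refine (ContinuousOn.div continuousOn_const
      ((continuous_const.sub (continuous_pow 2)).sqrt.continuousOn) ?_).aestronglyMeasurable
      measurableSet_Ioo
    intro u hu
    exact (Real.sqrt_pos.2 (by obtain ⟨h0,h1⟩ := hu; show (0:ℝ) < 1 - u ^ 2; nlinarith)).ne'
  · refine (ae_restrict_iff' measurableSet_Ioo).2 (Filter.Eventually.of_forall fun x hx => ?_)
    rw [Real.norm_eq_abs, abs_of_nonneg (by positivity)]
    exact base_bound hx

lemma base_val : ∫ u in (0:ℝ)..1, 1 / Real.sqrt (1 - u ^ 2) = π / 2 := by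
  have h := intervalIntegral.integral_eq_sub_of_hasDeriv_right_of_le zero_le_one
    (f := Real.arcsin) (f' := fun u => 1 / Real.sqrt (1 - u ^ 2))
    Real.continuous_arcsin.continuousOn
    (fun x hx => (Real.hasDerivAt_arcsin (by rintro rfl; exact absurd hx.1 (by norm_num))
      (by rintro rfl; exact absurd hx.2 (by norm_num))).hasDerivWithinAt)
    base_int
  rw [h, Real.arcsin_one, Real.arcsin_zero, sub_zero]

/-- integral inequality for any continuous odd `z` on `[-1,1]` with
`1 - u² ± 2az(u) > 0` and `|2az(u)| ≤ (1-u²)/2` on `(-1,1)`, where `a ∈ [0,1)`: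
`∫₀¹ [1/√(1-u²+2az) + 1/√(1-u²-2az)] du ≥ π + 3a² (∫₀¹ z/√(1-u²) du)²`. -/
theorem integral_inequality (a : ℝ) (ha0 : 0 ≤ a) (ha1 : a < 1)
    (z : ℝ → ℝ) (hzc : ContinuousOn z (Icc (-1 : ℝ) 1))
    (hzodd : ∀ u ∈ Icc (-1 : ℝ) 1, z (-u) = -z u)
    (hpos : ∀ u ∈ Ioo (-1 : ℝ) 1,
      0 < 1 - u ^ 2 + 2 * a * z u ∧ 0 < 1 - u ^ 2 - 2 * a * z u)
    (hsmall : ∀ u ∈ Ioo (-1 : ℝ) 1, |2 * a * z u| ≤ (1 - u ^ 2) / 2) :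
    π + 3 * a ^ 2 * (∫ u in (0:ℝ)..1, z u / Real.sqrt (1 - u ^ 2)) ^ 2 ≤
      ∫ u in (0:ℝ)..1,
        (1 / Real.sqrt (1 - u ^ 2 + 2 * a * z u) +
          1 / Real.sqrt (1 - u ^ 2 - 2 * a * z u)) := by
  have hsub : Ioo (0:ℝ) 1 ⊆ Ioo (-1:ℝ) 1 := fun u hu => ⟨by linarith [hu.1], hu.2⟩
  have hsub' : Ioo (0:ℝ) 1 ⊆ Icc (-1:ℝ) 1 :=
    fun u hu => ⟨by linarith [hu.1], le_of_lt hu.2⟩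
  have hzc' : ContinuousOn z (Ioo (0:ℝ) 1) := hzc.mono hsub'
  have hx_facts : ∀ u ∈ Ioo (0:ℝ) 1, 0 < 1 - u ^ 2 ∧ 1 - u ^ 2 ≤ 1 := by
    intro u hu; constructor <;> nlinarith [hu.1, hu.2]
  set f : ℝ → ℝ := fun u => 1 / Real.sqrt (1 - u ^ 2 + 2 * a * z u) +
      1 / Real.sqrt (1 - u ^ 2 - 2 * a * z u) with hf_def
  set q : ℝ → ℝ := fun u => (z u) ^ 2 / (1 - u ^ 2) with hq_def
  set h : ℝ → ℝ := fun u => z u / Real.sqrt (1 - u ^ 2) with hh_def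
  have hpt : ∀ u ∈ Ioo (0:ℝ) 1,
      (2 * (1 / Real.sqrt (1 - u ^ 2)) + 3 * a ^ 2 * ((z u) ^ 2 / (1 - u ^ 2))) ≤
      (1 / Real.sqrt (1 - u ^ 2 + 2 * a * z u) + 1 / Real.sqrt (1 - u ^ 2 - 2 * a * z u)) := by
    intro u hu
    obtain ⟨hx, hx1⟩ := hx_facts u hu
    have hb := hsmall u (hsub hu)
    have hk := key2 (x := 1 - u ^ 2) (b := 2 * a * z u) hx hb
    have hxs : 0 < Real.sqrt (1 - u ^ 2) := Real.sqrt_pos.2 hx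
    have hxx : (1 - u ^ 2) ^ 2 * Real.sqrt (1 - u ^ 2) ≤ 1 - u ^ 2 := by
      have h1 : Real.sqrt (1 - u ^ 2) ≤ 1 := Real.sqrt_le_one.2 (by linarith)
      nlinarith
    have hq2 : 3 * a ^ 2 * ((z u) ^ 2 / (1 - u ^ 2)) ≤
        3 / 4 * (2 * a * z u) ^ 2 / ((1 - u ^ 2) ^ 2 * Real.sqrt (1 - u ^ 2)) := by
      calc 3 * a ^ 2 * ((z u) ^ 2 / (1 - u ^ 2))
          ≤ 3 * a ^ 2 * ((z u) ^ 2 / ((1 - u ^ 2) ^ 2 * Real.sqrt (1 - u ^ 2))) := by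
            gcongr
      _ = 3 / 4 * (2 * a * z u) ^ 2 / ((1 - u ^ 2) ^ 2 * Real.sqrt (1 - u ^ 2)) := by ring
    have h2d : 2 * (1 / Real.sqrt (1 - u ^ 2)) = 2 / Real.sqrt (1 - u ^ 2) := by ring
    rw [h2d]
    linarith [hk, hq2]
  -- z bound on Ioo 0 1 (for a > 0)
  have hzb : ∀ u ∈ Ioo (0:ℝ) 1, 2 * a * |z u| ≤ (1 - u ^ 2) / 2 := by
    intro u hu
    have := hsmall u (hsub hu)
    calc 2 * a * |z u| = |2 * a * z u| := by
          rw [abs_mul, abs_mul, abs_two, abs_of_nonneg ha0]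
    _ ≤ (1 - u ^ 2) / 2 := this
  -- integrability of f
  have hf_int : IntervalIntegrable f volume 0 1 := by
    rw [intervalIntegrable_iff_integrableOn_Ioo_of_le zero_le_one]
    have hD : IntegrableOn (fun x : ℝ => 4 * (1 - x) ^ (-(1/2) : ℝ)) (Ioo 0 1) volume := by
      have := D_int.const_mul 4
      rwa [intervalIntegrable_iff_integrableOn_Ioo_of_le zero_le_one] at this
    apply hD.mono' ?_ ?_
    · have c1 : ContinuousOn (fun u : ℝ => 1 - u ^ 2 + 2 * a * z u) (Ioo 0 1) :=
        (continuousOn_const.sub ((continuous_pow 2).continuousOn)).add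
          (continuousOn_const.mul hzc')
      have c2 : ContinuousOn (fun u : ℝ => 1 - u ^ 2 - 2 * a * z u) (Ioo 0 1) :=
        (continuousOn_const.sub ((continuous_pow 2).continuousOn)).sub
          (continuousOn_const.mul hzc')
      refine (ContinuousOn.add
        (ContinuousOn.div continuousOn_const c1.sqrt fun u hu =>
          (Real.sqrt_pos.2 (hpos u (hsub hu)).1).ne')
        (ContinuousOn.div continuousOn_const c2.sqrt fun u hu =>
          (Real.sqrt_pos.2 (hpos u (hsub hu)).2).ne')).aestronglyMeasurable measurableSet_Ioo
    · refine (ae_restrict_iff' measurableSet_Ioo).2 (Filter.Eventually.of_forall fun x hx => ?_)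
      obtain ⟨h0, h1⟩ := hx
      have hx2 : 0 < 1 - x := by linarith
      have hxq : 0 < 1 - x ^ 2 := by nlinarith
      have hb := abs_le.1 (hsmall x (hsub ⟨h0, h1⟩))
      have hDeq : (1 - x) ^ (-(1/2) : ℝ) = 1 / Real.sqrt (1 - x) := by
        rw [Real.rpow_neg hx2.le, ← Real.sqrt_eq_rpow, one_div]
      have key : ∀ c : ℝ, (1 - x) / 4 ≤ c → 1 / Real.sqrt c ≤ 2 / Real.sqrt (1 - x) := by
        intro c hc
        have h4 : Real.sqrt ((1 - x) / 4) = Real.sqrt (1 - x) / 2 := by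
          rw [show (1 - x) / 4 = (1 - x) / 2 ^ 2 by ring, Real.sqrt_div hx2.le,
            Real.sqrt_sq (by norm_num : (0:ℝ) ≤ 2)]
        have hcs : Real.sqrt (1 - x) / 2 ≤ Real.sqrt c := by
          rw [← h4]; exact Real.sqrt_le_sqrt hc
        calc 1 / Real.sqrt c ≤ 1 / (Real.sqrt (1 - x) / 2) :=
              one_div_le_one_div_of_le (by positivity) hcs
        _ = 2 / Real.sqrt (1 - x) := by rw [one_div_div]
      rw [Real.norm_eq_abs, abs_of_nonneg (by positivity), hDeq]
      have b1 : 1 / Real.sqrt (1 - x ^ 2 + 2 * a * z x) ≤ 2 / Real.sqrt (1 - x) :=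
        key _ (by nlinarith [hb.1])
      have b2 : 1 / Real.sqrt (1 - x ^ 2 - 2 * a * z x) ≤ 2 / Real.sqrt (1 - x) :=
        key _ (by nlinarith [hb.2])
      have : f x = 1 / Real.sqrt (1 - x ^ 2 + 2 * a * z x) +
          1 / Real.sqrt (1 - x ^ 2 - 2 * a * z x) := rfl
      rw [this]
      have : 4 * (1 / Real.sqrt (1 - x)) = 2 / Real.sqrt (1 - x) + 2 / Real.sqrt (1 - x) := by
        ring
      rw [this]
      exact add_le_add b1 b2
  -- integrability of q (case a > 0)
  have hq0_int : 0 < a → IntegrableOn q (Ioo 0 1) volume := by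
    intro ha
    have hC : IntegrableOn (fun _ : ℝ => 1 / (16 * a ^ 2)) (Ioo 0 1) volume :=
      integrableOn_const measure_Ioo_lt_top.ne
    apply hC.mono' ?_ ?_
    · refine (ContinuousOn.div (hzc'.pow 2) (continuousOn_const.sub
        ((continuous_pow 2).continuousOn)) fun u hu => (hx_facts u hu).1.ne').aestronglyMeasurable
        measurableSet_Ioo
    · refine (ae_restrict_iff' measurableSet_Ioo).2 (Filter.Eventually.of_forall fun u hu => ?_)
      obtain ⟨hx, hx1⟩ := hx_facts u hu
      have hz := hzb u hu
      rw [Real.norm_eq_abs, abs_of_nonneg (div_nonneg (sq_nonneg _) hx.le)]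
      rw [div_le_div_iff₀ hx (by positivity)]
      have h2 := mul_self_le_mul_self (by positivity : (0:ℝ) ≤ 2 * a * |z u|) hz
      nlinarith [h2, sq_abs (z u), abs_nonneg (z u)]
  -- integrability of 3a²q
  have h3q_int : IntervalIntegrable (fun u => 3 * a ^ 2 * q u) volume 0 1 := by
    rcases eq_or_lt_of_le ha0 with hA | hA
    · have e : (fun u => 3 * a ^ 2 * q u) = fun _ => (0:ℝ) := by
        funext u; rw [← hA]; ring
      rw [e]; exact intervalIntegrable_const
    · rw [intervalIntegrable_iff_integrableOn_Ioo_of_le zero_le_one]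
      exact (hq0_int hA).const_mul _
  have hg_int : IntervalIntegrable
      (fun u => 2 * (1 / Real.sqrt (1 - u ^ 2)) + 3 * a ^ 2 * q u) volume 0 1 :=
    (base_int.const_mul 2).add h3q_int
  -- monotonicity
  have hmono : (∫ u in (0:ℝ)..1, (2 * (1 / Real.sqrt (1 - u ^ 2)) + 3 * a ^ 2 * q u)) ≤
      ∫ u in (0:ℝ)..1, f u := by
    apply integral_mono_ae_restrict zero_le_one hg_int hf_int
    rw [show volume.restrict (Icc (0:ℝ) 1) = volume.restrict (Ioo 0 1) from
      (Measure.restrict_congr_set Ioo_ae_eq_Icc).symm]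
    exact (ae_restrict_iff' measurableSet_Ioo).2
      (Filter.Eventually.of_forall fun u hu => hpt u hu)
  -- split
  have hsplit : (∫ u in (0:ℝ)..1, (2 * (1 / Real.sqrt (1 - u ^ 2)) + 3 * a ^ 2 * q u)) =
      π + ∫ u in (0:ℝ)..1, 3 * a ^ 2 * q u := by
    rw [integral_add (base_int.const_mul 2) h3q_int, intervalIntegral.integral_const_mul, base_val]
    ring
  -- Cauchy–Schwarz step
  have hCS : 3 * a ^ 2 * (∫ u in (0:ℝ)..1, h u) ^ 2 ≤ ∫ u in (0:ℝ)..1, 3 * a ^ 2 * q u := by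
    rcases eq_or_lt_of_le ha0 with hA | hA
    · rw [← hA]
      simp only [ne_eq, OfNat.ofNat_ne_zero, not_false_eq_true, zero_pow, mul_zero, zero_mul]
      apply intervalIntegral.integral_nonneg zero_le_one
      intro u hu
      have : 0 ≤ 1 - u ^ 2 := by nlinarith [hu.1, hu.2]
      have := div_nonneg (sq_nonneg (z u)) this
      positivity
    · have hμ : volume.restrict (Ioc (0:ℝ) 1) = volume.restrict (Ioo 0 1) :=
        (Measure.restrict_congr_set Ioo_ae_eq_Ioc).symm
      set μ := volume.restrict (Ioo (0:ℝ) 1) with hμ_def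
      haveI : IsFiniteMeasure μ := ⟨by
        rw [Measure.restrict_apply_univ]; exact measure_Ioo_lt_top⟩
      have hmeas : (μ univ).toReal = 1 := by
        rw [hμ_def, Measure.restrict_apply_univ, Real.volume_Ioo]
        norm_num
      have hK : (∫ u in (0:ℝ)..1, h u) = ∫ u, h u ∂μ := by
        rw [intervalIntegral.integral_of_le zero_le_one, hμ]
      have hQ : (∫ u in (0:ℝ)..1, 3 * a ^ 2 * q u) = 3 * a ^ 2 * ∫ u, q u ∂μ := by
        rw [intervalIntegral.integral_of_le zero_le_one, hμ, MeasureTheory.integral_const_mul]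
      -- integrability of h w.r.t. μ
      have hIq : Integrable q μ := hq0_int hA
      have hIh : Integrable h μ := by
        have hC : Integrable (fun _ : ℝ => 1 / (4 * a)) μ := integrable_const _
        apply hC.mono' ?_ ?_
        · refine (ContinuousOn.div hzc'
            ((continuousOn_const.sub ((continuous_pow 2).continuousOn)).sqrt)
            fun u hu => (Real.sqrt_pos.2 (hx_facts u hu).1).ne').aestronglyMeasurable
            measurableSet_Ioo
        · refine (ae_restrict_iff' measurableSet_Ioo).2
            (Filter.Eventually.of_forall fun u hu => ?_)
          obtain ⟨hx, hx1⟩ := hx_facts u hu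
          have hz := hzb u hu
          have hsq : 0 < Real.sqrt (1 - u ^ 2) := Real.sqrt_pos.2 hx
          rw [Real.norm_eq_abs, hh_def]
          rw [abs_div, abs_of_pos hsq, div_le_div_iff₀ hsq (by positivity)]
          have h1 : 1 - u ^ 2 ≤ Real.sqrt (1 - u ^ 2) := by
            nlinarith [Real.sq_sqrt hx.le, hsq]
          nlinarith
      have hqh : ∀ u ∈ Ioo (0:ℝ) 1, (h u) ^ 2 = q u := by
        intro u hu
        rw [hh_def, hq_def]
        simp only
        rw [div_pow, Real.sq_sqrt (hx_facts u hu).1.le]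
      have hqh_ae : (fun u => (h u) ^ 2) =ᵐ[μ] q :=
        (ae_restrict_iff' measurableSet_Ioo).2 (Filter.Eventually.of_forall hqh)
      have hIh2 : Integrable (fun u => (h u) ^ 2) μ := hIq.congr hqh_ae.symm
      set K := ∫ u, h u ∂μ with hK_def
      have h0 : 0 ≤ ∫ u, (h u - K) ^ 2 ∂μ := integral_nonneg fun u => sq_nonneg _
      have hexp : (∫ u, (h u - K) ^ 2 ∂μ) =
          (∫ u, (h u) ^ 2 ∂μ) - 2 * K * K + K ^ 2 := by
        have e : (fun u => (h u - K) ^ 2) =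
            fun u => ((h u) ^ 2 - 2 * K * h u + K ^ 2) := by funext u; ring
        have i1 : Integrable (fun u => (h u) ^ 2 - 2 * K * h u) μ :=
          hIh2.sub (hIh.const_mul (2 * K))
        rw [e, MeasureTheory.integral_add i1 (integrable_const _),
          MeasureTheory.integral_sub hIh2 (hIh.const_mul (2 * K)),
          MeasureTheory.integral_const_mul, MeasureTheory.integral_const,
          (show μ.real univ = 1 from hmeas), ← hK_def, smul_eq_mul, one_mul]
      have hq_eq : (∫ u, (h u) ^ 2 ∂μ) = ∫ u, q u ∂μ := integral_congr_ae hqh_ae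
      have hKQ : K ^ 2 ≤ ∫ u, q u ∂μ := by
        rw [← hq_eq]; nlinarith [h0, hexp]
      rw [hQ, hK]
      have h3a : (0:ℝ) ≤ 3 * a ^ 2 := by positivity
      exact mul_le_mul_of_nonneg_left hKQ h3a
  calc π + 3 * a ^ 2 * (∫ u in (0:ℝ)..1, z u / Real.sqrt (1 - u ^ 2)) ^ 2
      = π + 3 * a ^ 2 * (∫ u in (0:ℝ)..1, h u) ^ 2 := rfl
  _ ≤ π + ∫ u in (0:ℝ)..1, 3 * a ^ 2 * q u := by linarith [hCS]
  _ = ∫ u in (0:ℝ)..1, (2 * (1 / Real.sqrt (1 - u ^ 2)) + 3 * a ^ 2 * q u) := hsplit.symm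
  _ ≤ ∫ u in (0:ℝ)..1, f u := hmono
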